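/- The function V: ℝ² → ℝ defined by V(x) = W(x) if x2 ≥ 0 and V(x) = W(−x) if x2 < 0, where W is the piecewise function built from W1, W2, W3, is nonnegative everywhere and vanishes only at the origin (positive definiteness). -/

import Mathlib

noncomputable def W (L lam2 α : ℝ) (x1 x2 : ℝ) : ℝ :=
  if x1 ≤ x2 ^ 2 / (4 * α * (lam2 + 1) * L) then
    x2 ^ 2 / (2 * α * (lam2 + 1) * L) - x1
  else if x1 ≤ (2 * α + 1) * x2 ^ 2 / (4 * α * (lam2 + 1) * L) then
    x2 ^ 2 / (4 * α * (lam2 + 1) * L)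
  else x1 - x2 ^ 2 / (2 * (lam2 + 1) * L)

noncomputable def V (L lam2 α : ℝ) (x1 x2 : ℝ) : ℝ :=
  if 0 ≤ x2 then W L lam2 α x1 x2 else W L lam2 α (-x1) (-x2)

lemma Wkey (L lam2 α : ℝ) (hL : 0 < L) (hlam2 : 0 < lam2) (hα1 : 1 < α) :
    ∀ x1 x2 : ℝ, 0 ≤ W L lam2 α x1 x2 ∧ (W L lam2 α x1 x2 = 0 ↔ x1 = 0 ∧ x2 = 0) := by
  have hl : 0 < lam2 + 1 := by linarith
  have hα0 : 0 < α := by linarith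
  intro x1 x2
  have hA : 0 < 4 * α * (lam2 + 1) * L := by positivity
  set t := x2 ^ 2 / (4 * α * (lam2 + 1) * L) with ht
  have ht0 : 0 ≤ t := by positivity
  have htx : t = 0 → x2 = 0 := by
    intro h
    rw [ht, div_eq_zero_iff] at h
    rcases h with h | h
    · exact (pow_eq_zero_iff (by norm_num)).mp h
    · exact absurd h hA.ne'
  have e1 : x2 ^ 2 / (2 * α * (lam2 + 1) * L) = 2 * t := by
    rw [ht]; field_simp; ring
  have e2 : x2 ^ 2 / (2 * (lam2 + 1) * L) = 2 * α * t := by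
    rw [ht]; field_simp; ring
  have e3 : (2 * α + 1) * x2 ^ 2 / (4 * α * (lam2 + 1) * L) = (2 * α + 1) * t := by
    rw [ht]; ring
  unfold W
  rw [← ht, e1, e2, e3]
  split_ifs with h1 h2
  · refine ⟨by linarith, ⟨?_, ?_⟩⟩
    · intro h
      have hx1 : x1 = 2 * t := by linarith
      have : t ≤ 0 := by linarith
      have ht' : t = 0 := le_antisymm this ht0
      exact ⟨by linarith, htx ht'⟩
    · rintro ⟨rfl, rfl⟩
      simp [ht]
  · refine ⟨ht0, ⟨?_, ?_⟩⟩
    · intro h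
      have hx2 : x2 = 0 := htx h
      exfalso
      apply h1
      rw [h]
      nlinarith
    · rintro ⟨rfl, rfl⟩
      simp [ht]
  · push_neg at h1 h2
    refine ⟨by nlinarith, ⟨?_, ?_⟩⟩
    · intro h
      exfalso
      nlinarith
    · rintro ⟨rfl, rfl⟩
      exfalso
      apply absurd (le_refl (0:ℝ)) (by simpa [ht] using not_le.mpr h1)
  
theorem stmt_5 (L lam2 α : ℝ) (hL : 0 < L) (hlam2 : 0 < lam2) (hα1 : 1 < α) (hα4 : α ≤ 4) :
    ∀ x1 x2 : ℝ, 0 ≤ V L lam2 α x1 x2 ∧ (V L lam2 α x1 x2 = 0 ↔ x1 = 0 ∧ x2 = 0) := by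
  intro x1 x2
  unfold V
  split_ifs with h
  · exact Wkey L lam2 α hL hlam2 hα1 x1 x2
  · obtain ⟨h0, hiff⟩ := Wkey L lam2 α hL hlam2 hα1 (-x1) (-x2)
    refine ⟨h0, ?_⟩
    rw [hiff]
    simp [neg_eq_zero]
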